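/- Let 0 ≤ a < b ≤ c, let C > 0, and let λ : [0,c] → ℝ be a function such that |λ(t) − λ(s)| ≤ C√(t−s) for all 0 ≤ s ≤ t ≤ a, λ is constant on [a,b], |λ(t) − λ(s)| ≤ C√(t−s) for all b ≤ s ≤ t ≤ c, and 4a(c − b) ≤ (b − a)². Then |λ(t) − λ(s)| ≤ C√(t−s) for all 0 ≤ s ≤ t ≤ c, i.e. ‖λ‖_{1/2} ≤ C on [0,c]. -/
import Mathlib


open Set Filter Topology

noncomputable section

/-- (Concatenation step in the construction of Proposition
`counterexpl`.)  If `lam` satisfies the Lip(1/2) bound with constant `C` on `[0,a]` and on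
`[b,c]`, is constant on `[a,b]`, and `4a(c-b) ≤ (b-a)²`, then `lam` satisfies the Lip(1/2)
bound with constant `C` on all of `[0,c]`. -/
theorem halflip_concat (a b c C : ℝ) (ha : 0 ≤ a) (hab : a < b) (hbc : b ≤ c) (hC : 0 < C)
    (lam : ℝ → ℝ)
    (h1 : ∀ s t : ℝ, 0 ≤ s → s ≤ t → t ≤ a → |lam t - lam s| ≤ C * Real.sqrt (t - s))
    (h2 : ∀ s ∈ Set.Icc a b, lam s = lam a)
    (h3 : ∀ s t : ℝ, b ≤ s → s ≤ t → t ≤ c → |lam t - lam s| ≤ C * Real.sqrt (t - s))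
    (h4 : 4 * a * (c - b) ≤ (b - a) ^ 2) :
    ∀ s t : ℝ, 0 ≤ s → s ≤ t → t ≤ c → |lam t - lam s| ≤ C * Real.sqrt (t - s) := by
  intro s t hs hst htc
  have sqrt_mono : ∀ x y : ℝ, x ≤ y → C * Real.sqrt x ≤ C * Real.sqrt y := fun x y h =>
    mul_le_mul_of_nonneg_left (Real.sqrt_le_sqrt h) hC.le
  rcases le_or_gt t a with hta | hta
  · exact h1 s t hs hst hta
  rcases le_or_gt b s with hbs | hbs
  · exact h3 s t hbs hst htc
  -- now s < b and a < t
  rcases le_or_gt t b with htb | htb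
  · -- t ∈ (a, b]
    have hlt : lam t = lam a := h2 t ⟨hta.le, htb⟩
    rcases le_or_gt s a with hsa | hsa
    · rw [hlt]
      calc |lam a - lam s| ≤ C * Real.sqrt (a - s) := h1 s a hs hsa le_rfl
        _ ≤ C * Real.sqrt (t - s) := sqrt_mono _ _ (by linarith)
    · rw [hlt, h2 s ⟨hsa.le, hbs.le⟩]
      simp [mul_nonneg hC.le (Real.sqrt_nonneg _)]
  · -- b < t
    rcases le_or_gt a s with has | has
    · -- s ∈ [a, b)
      have hls : lam s = lam b := (h2 s ⟨has, hbs.le⟩).trans (h2 b ⟨hab.le, le_rfl⟩).symm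
      rw [hls]
      calc |lam t - lam b| ≤ C * Real.sqrt (t - b) := h3 b t le_rfl htb.le htc
        _ ≤ C * Real.sqrt (t - s) := sqrt_mono _ _ (by linarith)
    · -- s < a < b < t
      have hab' : lam b = lam a := h2 b ⟨hab.le, le_rfl⟩
      have key : Real.sqrt (t - b) + Real.sqrt (a - s) ≤ Real.sqrt (t - s) := by
        have hx : (0:ℝ) ≤ t - b := by linarith
        have hy : (0:ℝ) ≤ a - s := by linarith
        have hxy : (t - b) * (a - s) ≤ (c - b) * a :=
          mul_le_mul (by linarith) (by linarith) hy (by linarith)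
        have h2s : 2 * Real.sqrt ((t - b) * (a - s)) ≤ b - a := by
          have h1' : Real.sqrt ((t - b) * (a - s)) ≤ Real.sqrt ((c - b) * a) :=
            Real.sqrt_le_sqrt hxy
          have h2' : 2 * Real.sqrt ((c - b) * a) ≤ b - a := by
            nlinarith [Real.sq_sqrt (show (0:ℝ) ≤ (c - b) * a by nlinarith),
              Real.sqrt_nonneg ((c - b) * a)]
          linarith
        have hsum : (Real.sqrt (t - b) + Real.sqrt (a - s)) ^ 2 ≤ t - s := by
          have e : (Real.sqrt (t - b) + Real.sqrt (a - s)) ^ 2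
              = (t - b) + (a - s) + 2 * Real.sqrt ((t - b) * (a - s)) := by
            rw [add_sq, Real.sq_sqrt hx, Real.sq_sqrt hy, Real.sqrt_mul hx]; ring
          rw [e]; linarith
        calc Real.sqrt (t - b) + Real.sqrt (a - s)
            = Real.sqrt ((Real.sqrt (t - b) + Real.sqrt (a - s)) ^ 2) :=
              (Real.sqrt_sq (by positivity)).symm
          _ ≤ Real.sqrt (t - s) := Real.sqrt_le_sqrt hsum
      calc |lam t - lam s| ≤ |lam t - lam b| + |lam a - lam s| := by
            rw [hab']; exact abs_sub_le _ (lam a) _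
        _ ≤ C * Real.sqrt (t - b) + C * Real.sqrt (a - s) := by
            gcongr
            · exact h3 b t le_rfl htb.le htc
            · exact h1 s a hs has.le le_rfl
        _ = C * (Real.sqrt (t - b) + Real.sqrt (a - s)) := by ring
        _ ≤ C * Real.sqrt (t - s) := mul_le_mul_of_nonneg_left key hC.le
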